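/- arXiv:1309.5277 — 3 statements merged into one kernel-verified Lean document; each statement's English description precedes it below -/
import Mathlib

section
/- Let A be an invertible d×d matrix over ℚ and let v = (t₁,…,t_d) ∈ ℝ^d be a nonzero vector with Aᵀv = λv for some real λ > 0 with λ ≠ 1. Then the map ψ : ℤ ⋉_A ℚ^d → Aff₊(ℝ) defined by ψ(n,h) = (x ↦ λⁿx + ⟨v,h⟩), where ⟨v,h⟩ = Σᵢ tᵢhᵢ, is a group homomorphism with non-Abelian image, and ψ is injective if and only if t₁,…,t_d are linearly independent over ℚ. -/
open Matrix Set

noncomputable section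

/-- The group `Aff₊(ℝ)` of orientation-preserving affine transformations `x ↦ a·x + b`
(`a > 0`, composition as group law), as a subgroup of the permutation group of `ℝ`. -/
def AffPos : Subgroup (Equiv.Perm ℝ) where
  carrier := { e | ∃ a b : ℝ, 0 < a ∧ ∀ x, e x = a * x + b }
  one_mem' := ⟨1, 0, one_pos, fun x => by simp⟩
  mul_mem' := by
    rintro e₁ e₂ ⟨a₁, b₁, ha₁, h₁⟩ ⟨a₂, b₂, ha₂, h₂⟩
    refine ⟨a₁ * a₂, a₁ * b₂ + b₁, mul_pos ha₁ ha₂, fun x => ?_⟩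
    simp only [Equiv.Perm.mul_apply, h₁, h₂]; ring
  inv_mem' := by
    rintro e ⟨a, b, ha, h⟩
    refine ⟨a⁻¹, -b / a, inv_pos.mpr ha, fun x => ?_⟩
    have key : e (a⁻¹ * x + -b / a) = x := by rw [h]; field_simp; ring
    conv_lhs => rw [← key]
    exact Equiv.symm_apply_apply e _

/-- The semidirect product `G = ℤ ⋉_A ℚ^d`, the action of the generator of the `ℤ`-factor
being the additive automorphism `e` of `ℚ^d` (given by the matrix `A`). -/
abbrev GFull (d : ℕ) (e : (Fin d → ℚ) ≃+ (Fin d → ℚ)) : Type :=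
  SemidirectProduct (Multiplicative (Fin d → ℚ)) (Multiplicative ℤ)
    (zpowersHom (MulAut (Multiplicative (Fin d → ℚ))) (AddEquiv.toMultiplicative e))

/-- The element `(n, h)` of `ℤ ⋉_A ℚ^d`. -/
def elemF {d : ℕ} {e : (Fin d → ℚ) ≃+ (Fin d → ℚ)} (n : ℤ) (b : Fin d → ℚ) : GFull d e :=
  ⟨Multiplicative.ofAdd b, Multiplicative.ofAdd n⟩

def affMap (a b : ℝ) (ha : 0 < a) : AffPos :=
  ⟨{ toFun := fun x => a * x + b
     invFun := fun x => (x - b) / a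
     left_inv := fun x => by field_simp; ring
     right_inv := fun x => by field_simp; ring }, a, b, ha, fun _ => rfl⟩

lemma affMap_apply (a b : ℝ) (ha : 0 < a) (x : ℝ) :
    ((affMap a b ha : Equiv.Perm ℝ)) x = a * x + b := rfl

lemma affMap_mul (a₁ b₁ a₂ b₂ : ℝ) (h₁ : 0 < a₁) (h₂ : 0 < a₂) :
    affMap a₁ b₁ h₁ * affMap a₂ b₂ h₂ = affMap (a₁ * a₂) (a₁ * b₂ + b₁) (mul_pos h₁ h₂) := by
  apply Subtype.ext; apply Equiv.ext; intro x
  show a₁ * (a₂ * x + b₂) + b₁ = (a₁ * a₂) * x + (a₁ * b₂ + b₁)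
  ring

lemma affMap_eq {a b a' b' : ℝ} (ha : 0 < a) (ha' : 0 < a') (h1 : a = a') (h2 : b = b') :
    affMap a b ha = affMap a' b' ha' := by subst h1; subst h2; rfl

lemma affMap_one : affMap 1 0 one_pos = 1 := by
  apply Subtype.ext; apply Equiv.ext; intro x
  show 1 * x + 0 = x; ring

/-- If `Aᵀ v = λ v` with `λ > 0`, `λ ≠ 1`, `v ≠ 0`, then
`(n,h) ↦ (x ↦ λⁿ x + ⟨v,h⟩)` is a homomorphism `ℤ ⋉_A ℚ^d → Aff₊(ℝ)` with non-Abelian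
image, injective iff the coordinates of `v` are linearly independent over `ℚ`. -/
theorem stmt_1 {d : ℕ} (hd : 0 < d) (A : Matrix (Fin d) (Fin d) ℚ) (hA : IsUnit A.det)
    (e : (Fin d → ℚ) ≃+ (Fin d → ℚ)) (he : ∀ x : Fin d → ℚ, e x = A.mulVec x)
    (v : Fin d → ℝ) (hv : v ≠ 0) (lam : ℝ) (hlam : 0 < lam) (hlam1 : lam ≠ 1)
    (heig : (A.map (fun q : ℚ => (q : ℝ))).transpose.mulVec v = lam • v) :
    ∃ ψ : GFull d e →* AffPos,
      (∀ (n : ℤ) (h : Fin d → ℚ) (x : ℝ),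
        ((ψ (elemF n h) : Equiv.Perm ℝ)) x = lam ^ n * x + ∑ i, v i * (h i : ℝ)) ∧
      (∃ g₁ g₂ : GFull d e, ψ g₁ * ψ g₂ ≠ ψ g₂ * ψ g₁) ∧
      (Function.Injective ψ ↔ LinearIndependent ℚ v) := by
  have hlamne : lam ≠ 0 := ne_of_gt hlam
  set c : (Fin d → ℚ) → ℝ := fun h => ∑ i, v i * (h i : ℝ) with hc
  have c_add : ∀ h₁ h₂ : Fin d → ℚ, c (h₁ + h₂) = c h₁ + c h₂ := by
    intro h₁ h₂
    simp only [hc, Pi.add_apply, Rat.cast_add, mul_add, Finset.sum_add_distrib]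
  have heig' : ∀ j, (∑ i, (A i j : ℝ) * v i) = lam * v j := by
    intro j
    have h0 := congrFun heig j
    simpa [Matrix.mulVec, dotProduct, Matrix.transpose_apply, Matrix.map_apply] using h0
  have c_e : ∀ h : Fin d → ℚ, c (e h) = lam * c h := by
    intro h
    have h1 : ∀ i, ((e h) i : ℝ) = ∑ j, (A i j : ℝ) * (h j : ℝ) := by
      intro i
      rw [he]
      simp [Matrix.mulVec, dotProduct]
    calc c (e h) = ∑ i, ∑ j, v i * ((A i j : ℝ) * (h j : ℝ)) := by
          simp only [hc, h1, Finset.mul_sum]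
      _ = ∑ j, (∑ i, (A i j : ℝ) * v i) * (h j : ℝ) := by
          rw [Finset.sum_comm]
          exact Finset.sum_congr rfl fun j _ => by
            rw [Finset.sum_mul]
            exact Finset.sum_congr rfl fun i _ => by ring
      _ = ∑ j, lam * (v j * (h j : ℝ)) := by
          simp only [heig']; exact Finset.sum_congr rfl fun j _ => by ring
      _ = lam * c h := by rw [hc, Finset.mul_sum]
  have c_esymm : ∀ h : Fin d → ℚ, c (e.symm h) = lam⁻¹ * c h := by
    intro h
    have := c_e (e.symm h)
    rw [e.apply_symm_apply] at this
    field_simp [this]; rw [this]; ring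
  set F : MulAut (Multiplicative (Fin d → ℚ)) := AddEquiv.toMultiplicative e with hF
  have c_pow : ∀ (n : ℤ) (m : Multiplicative (Fin d → ℚ)),
      c ((F ^ n) m).toAdd = lam ^ n * c m.toAdd := by
    intro n
    induction n using Int.induction_on with
    | zero => intro m; simp
    | succ k ih =>
        intro m
        have hstep : (F ^ ((k : ℤ) + 1)) m = (F ^ (k : ℤ)) (F m) := by
          rw [_root_.zpow_add_one]; rfl
        have hc2 : (F m).toAdd = e m.toAdd := rfl
        rw [hstep, ih, hc2, c_e, zpow_add_one₀ hlamne]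
        ring
    | pred k ih =>
        intro m
        have hstep : (F ^ (-(k : ℤ) - 1)) m = (F ^ (-(k : ℤ))) (F⁻¹ m) := by
          rw [_root_.zpow_sub_one]; rfl
        have hc2 : (F⁻¹ m).toAdd = e.symm m.toAdd := rfl
        rw [hstep, ih, hc2, c_esymm, zpow_sub_one₀ hlamne]
        ring
  let ψ : GFull d e →* AffPos :=
    { toFun := fun g => affMap (lam ^ g.right.toAdd) (c g.left.toAdd) (zpow_pos hlam _)
      map_one' := by
        refine (affMap_eq _ one_pos ?_ ?_).trans affMap_one
        · show lam ^ (0 : ℤ) = 1; simp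
        · show c 0 = 0; simp [hc]
      map_mul' := by
        intro g₁ g₂
        apply Subtype.ext; apply Equiv.ext; intro x
        show lam ^ (g₁.right.toAdd + g₂.right.toAdd) * x
            + c (g₁.left.toAdd + ((F ^ g₁.right.toAdd) g₂.left).toAdd)
          = lam ^ g₁.right.toAdd * (lam ^ g₂.right.toAdd * x + c g₂.left.toAdd)
            + c g₁.left.toAdd
        rw [c_add, c_pow, zpow_add₀ hlamne]
        ring }
  have hψ : ∀ (n : ℤ) (h : Fin d → ℚ) (x : ℝ),
      ((ψ (elemF n h) : Equiv.Perm ℝ)) x = lam ^ n * x + ∑ i, v i * (h i : ℝ) := by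
    intro n h x; rfl
  refine ⟨ψ, hψ, ?_, ?_⟩
  · -- non-abelian
    obtain ⟨i, hvi⟩ := Function.ne_iff.mp hv
    have hvi' : v i ≠ 0 := hvi
    have hcs : (∑ j, v j * (((Pi.single i 1 : Fin d → ℚ)) j : ℝ)) = v i := by
      rw [Finset.sum_eq_single i]
      · simp
      · intro j _ hj; simp [Pi.single_eq_of_ne hj]
      · intro h; exact absurd (Finset.mem_univ i) h
    refine ⟨elemF 1 0, elemF 0 (Pi.single i 1), fun hcon => ?_⟩
    have h0 := congrArg (fun q : AffPos => (q : Equiv.Perm ℝ) 0) hcon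
    simp only [Subgroup.coe_mul, Equiv.Perm.mul_apply, hψ, hcs, Pi.zero_apply,
      Rat.cast_zero, mul_zero, Finset.sum_const_zero, zpow_one, zpow_zero, one_mul,
      zero_add, add_zero] at h0
    have hz : (lam - 1) * v i = 0 := by linarith
    rcases mul_eq_zero.mp hz with h | h
    · exact hlam1 (by linarith)
    · exact hvi' h
  · rw [injective_iff_map_eq_one, Fintype.linearIndependent_iff]
    constructor
    · intro H g hg i
      have hcg : c g = 0 := by
        rw [← hg, hc]
        exact Finset.sum_congr rfl fun j _ => by
          rw [Rat.smul_def]; ring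
      have h1 : ψ (elemF 0 g) = 1 := by
        apply Subtype.ext; apply Equiv.ext; intro x
        show lam ^ (0 : ℤ) * x + c g = x
        rw [hcg, zpow_zero]; ring
      have h2 := H _ h1
      have h3 : (Multiplicative.ofAdd g) = (1 : Multiplicative (Fin d → ℚ)) :=
        congrArg SemidirectProduct.left h2
      have h4 : g = 0 := h3
      simp [h4]
    · intro hli g hg1
      have hx : ∀ x : ℝ, lam ^ g.right.toAdd * x + c g.left.toAdd = x := by
        intro x
        have h6 : ((ψ g : Equiv.Perm ℝ)) x = ((1 : AffPos) : Equiv.Perm ℝ) x := by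
          rw [hg1]
        exact h6.trans rfl
      have hc0 : c g.left.toAdd = 0 := by
        have h7 := hx 0
        rw [mul_zero, zero_add] at h7
        exact h7
      have hn1 : lam ^ g.right.toAdd = 1 := by
        have h8 := hx 1
        rw [hc0, add_zero, mul_one] at h8
        exact h8
      have hlog : Real.log lam ≠ 0 := by
        intro h
        rcases Real.log_eq_zero.mp h with h | h | h
        · exact hlamne h
        · exact hlam1 h
        · linarith
      have hn0 : g.right.toAdd = 0 := by
        have h9 := congrArg Real.log hn1
        rw [Real.log_zpow, Real.log_one] at h9
        rcases mul_eq_zero.mp h9 with h | h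
        · exact_mod_cast h
        · exact absurd h hlog
      have hleft : g.left.toAdd = 0 := by
        have h10 := hli g.left.toAdd ?_
        · funext j; exact h10 j
        · rw [← hc0, hc]
          exact Finset.sum_congr rfl fun j _ => by rw [Rat.smul_def]; ring
      have hright : g.right = 1 := Multiplicative.toAdd.injective hn0
      have hleft' : g.left = 1 := Multiplicative.toAdd.injective hleft
      exact SemidirectProduct.ext hleft' hright
end
end

section
/- Suppose the invertible d×d matrix A over ℚ is ℚ-irreducible. If λ ∈ ℝ and v = (t₁,…,t_d) ∈ ℝ^d is a nonzero vector such that Aᵀv = λv, then the real numbers t₁,…,t_d are linearly independent over ℚ. -/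
open Matrix Set

noncomputable section

/-- A matrix `A` is `ℚ`-irreducible if the only `ℚ`-linear subspaces of `ℚ^d`
invariant under `A` are `{0}` and `ℚ^d`. -/
def QIrreducible {d : ℕ} (A : Matrix (Fin d) (Fin d) ℚ) : Prop :=
  ∀ W : Submodule ℚ (Fin d → ℚ), (∀ v ∈ W, A.mulVec v ∈ W) → W = ⊥ ∨ W = ⊤

/-- `z : ℂ` is an eigenvalue of the rational matrix `A`, i.e. a root of its
characteristic polynomial. -/
def IsEigC {d : ℕ} (A : Matrix (Fin d) (Fin d) ℚ) (z : ℂ) : Prop :=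
  (A.charpoly.map (algebraMap ℚ ℂ)).IsRoot z

/-- A rational matrix is hyperbolic if no complex eigenvalue has modulus `1`. -/
def Hyperbolic {d : ℕ} (A : Matrix (Fin d) (Fin d) ℚ) : Prop :=
  ∀ z : ℂ, IsEigC A z → ‖z‖ ≠ 1

/-- For a `ℚ`-irreducible invertible matrix `A`, the coordinates of any
nonzero real eigenvector of `Aᵀ` are linearly independent over `ℚ`. -/
theorem stmt_3 {d : ℕ} (A : Matrix (Fin d) (Fin d) ℚ) (hA : IsUnit A.det)
    (hirr : QIrreducible A) (lam : ℝ) (v : Fin d → ℝ) (hv : v ≠ 0)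
    (heig : (A.map (fun q : ℚ => (q : ℝ))).transpose.mulVec v = lam • v) :
    LinearIndependent ℚ v := by
  classical
  -- the linear map sending rational coefficients to the combination of the `v i`
  let φ : (Fin d → ℚ) →ₗ[ℚ] ℝ :=
    { toFun := fun w => ∑ i, w i • v i
      map_add' := by
        intro w₁ w₂
        simp [add_smul, Finset.sum_add_distrib]
      map_smul' := by
        intro c w
        simp [mul_smul, Finset.smul_sum] }
  set W : Submodule ℚ (Fin d → ℚ) := LinearMap.ker φ with hW
  have hinv : ∀ w ∈ W, A.mulVec w ∈ W := by
    intro w hw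
    have hw0 : ∑ i, w i • v i = 0 := hw
    have key : ∑ i, (A.mulVec w) i • v i
        = lam * ∑ j, w j • v j := by
      have : ∑ i, (A.mulVec w) i • v i
          = ∑ j, w j • ((A.map (fun q : ℚ => (q : ℝ))).transpose.mulVec v) j := by
        simp only [Matrix.mulVec, dotProduct, Matrix.transpose_apply,
          Matrix.map_apply, Rat.smul_def]
        push_cast
        simp only [Finset.sum_mul, Finset.mul_sum]
        rw [Finset.sum_comm]
        apply Finset.sum_congr rfl
        intro j _
        apply Finset.sum_congr rfl
        intro i _
        ring
      rw [this, heig]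
      simp only [Pi.smul_apply, smul_eq_mul, Rat.smul_def, Finset.mul_sum]
      congr 1
      ext j
      ring
    have : (∑ i, (A.mulVec w) i • v i) = 0 := by rw [key, hw0, mul_zero]
    exact this
  have hne : W ≠ ⊤ := by
    intro htop
    apply hv
    ext i
    have hm : Pi.single i (1 : ℚ) ∈ W := htop ▸ Submodule.mem_top
    have h0 : φ (Pi.single i (1 : ℚ)) = 0 := LinearMap.mem_ker.mp hm
    simp only [φ, LinearMap.coe_mk, AddHom.coe_mk, Pi.single_apply] at h0
    simpa using h0
  have hbot : W = ⊥ := (hirr W hinv).resolve_right hne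
  rw [Fintype.linearIndependent_iff]
  intro w hw0
  have hwW : w ∈ W := by
    show ∑ i, w i • v i = 0
    exact hw0
  rw [hbot] at hwW
  intro i
  exact congrFun (Submodule.mem_bot ℚ |>.mp hwW) i

end
end

section
/- Let A be an invertible d×d matrix over ℚ such that 1 is not an eigenvalue of A (det(A − I) ≠ 0), let H be a subgroup of ℚ^d with A(H) = H whose ℚ-linear span equals ℚ^d, and let G = ℤ ⋉_A H. Then for every action ρ of G by orientation-preserving homeomorphisms of the circle ℝ/ℤ, the set P of points x ∈ ℝ/ℤ that are periodic under ρ(0,b) for every b ∈ H (i.e., for each b ∈ H there is a positive integer k with ρ(0,b)ᵏ(x) = x) is nonempty and G-invariant: ρ(g)(P) = P for every g ∈ G. -/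
open Matrix Set

noncomputable section

/-- The semidirect product `G = ℤ ⋉_A H`, where the generator `a` of the `ℤ`-factor acts
on the subgroup `H ≤ ℚ^d` by the restriction of the matrix `A`; this restriction (which is
well defined exactly when `A(H) = H`) is encoded as an additive automorphism `e` of `H`. -/
abbrev GSd {d : ℕ} (H : AddSubgroup (Fin d → ℚ)) (e : H ≃+ H) : Type :=
  SemidirectProduct (Multiplicative H) (Multiplicative ℤ)
    (zpowersHom (MulAut (Multiplicative H)) (AddEquiv.toMultiplicative e))

/-- The element `(n, h)` of `G = ℤ ⋉_A H`; thus `a = elemSd 1 0` and `H` is identified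
with the elements `elemSd 0 h`. -/
def elemSd {d : ℕ} {H : AddSubgroup (Fin d → ℚ)} {e : H ≃+ H} (n : ℤ) (b : H) : GSd H e :=
  ⟨Multiplicative.ofAdd b, Multiplicative.ofAdd n⟩

/-- The circle `ℝ/ℤ`. -/
abbrev Circle1 : Type := AddCircle (1:ℝ)

/-- A permutation of the circle `ℝ/ℤ` which is an orientation-preserving `C¹`
diffeomorphism: it admits a continuously differentiable lift `F : ℝ → ℝ` with everywhere
positive derivative satisfying `F (x+1) = F x + 1`. -/
def IsC1CirclePerm (σ : Equiv.Perm Circle1) : Prop :=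
  ∃ F : ℝ → ℝ, ContDiff ℝ 1 F ∧ (∀ x : ℝ, 0 < deriv F x) ∧ (∀ x : ℝ, F (x + 1) = F x + 1) ∧
    ∀ x : ℝ, σ (x : Circle1) = (F x : Circle1)

/-- A permutation of the circle `ℝ/ℤ` which is an orientation-preserving homeomorphism:
it admits a continuous strictly increasing lift `F : ℝ → ℝ` with `F (x+1) = F x + 1`. -/
def IsHomeoCirclePerm (σ : Equiv.Perm Circle1) : Prop :=
  ∃ F : ℝ → ℝ, StrictMono F ∧ Continuous F ∧ (∀ x : ℝ, F (x + 1) = F x + 1) ∧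
    ∀ x : ℝ, σ (x : Circle1) = (F x : Circle1)

/- ===== auxiliary lemmas ===== -/

local notation "τ" => CircleDeg1Lift.translationNumber

def IsLiftOf (f : CircleDeg1Lift) (σ : Equiv.Perm Circle1) : Prop :=
  ∀ x : ℝ, σ (x : Circle1) = (f x : Circle1)

lemma lift_exists {σ : Equiv.Perm Circle1} (h : IsHomeoCirclePerm σ) :
    ∃ f : CircleDeg1Lift, Continuous ⇑f ∧ IsUnit f ∧ IsLiftOf f σ := by
  obtain ⟨F, hmono, hcont, hper, hlift⟩ := h
  refine ⟨⟨⟨F, hmono.monotone⟩, hper⟩, hcont, ?_, hlift⟩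
  rw [CircleDeg1Lift.isUnit_iff_bijective]
  exact ⟨hmono.injective, (CircleDeg1Lift.continuous_iff_surjective _).mp hcont⟩

lemma unit_coe_continuous (u : CircleDeg1Liftˣ) : Continuous ⇑(u : CircleDeg1Lift) := by
  rw [← CircleDeg1Lift.coe_toOrderIso]
  exact OrderIso.continuous _

lemma lift_mul {f g : CircleDeg1Lift} {σ σ' : Equiv.Perm Circle1}
    (hf : IsLiftOf f σ) (hg : IsLiftOf g σ') : IsLiftOf (f * g) (σ * σ') := by
  intro x
  simp only [Equiv.Perm.mul_apply, CircleDeg1Lift.mul_apply, hg x, hf (g x)]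

lemma lift_inv {u : CircleDeg1Liftˣ} {σ : Equiv.Perm Circle1}
    (hf : IsLiftOf (u : CircleDeg1Lift) σ) :
    IsLiftOf ((u⁻¹ : CircleDeg1Liftˣ) : CircleDeg1Lift) σ⁻¹ := by
  intro x
  apply σ.injective
  rw [show σ (σ⁻¹ (x : Circle1)) = (x : Circle1) from σ.apply_symm_apply _, hf, CircleDeg1Lift.units_apply_inv_apply]

lemma lift_pow {f : CircleDeg1Lift} {σ : Equiv.Perm Circle1}
    (hf : IsLiftOf f σ) (n : ℕ) : IsLiftOf (f ^ n) (σ ^ n) := by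
  induction n with
  | zero => intro x; simp [IsLiftOf]
  | succ n ih =>
      rw [pow_succ, pow_succ]
      exact lift_mul ih hf

lemma lift_continuous_circle {f : CircleDeg1Lift} {σ : Equiv.Perm Circle1}
    (hc : Continuous ⇑f) (hf : IsLiftOf f σ) : Continuous ⇑σ := by
  have hq : Topology.IsQuotientMap ((↑) : ℝ → Circle1) := QuotientAddGroup.isQuotientMap_mk _
  rw [hq.continuous_iff]
  have : ⇑σ ∘ ((↑) : ℝ → Circle1) = fun x : ℝ => ((f x : ℝ) : Circle1) := funext fun x => hf x
  rw [this]
  exact (AddCircle.continuous_mk' 1).comp hc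

lemma int_valued_const {D : ℝ → ℝ} (hc : Continuous D) (hint : ∀ x, ∃ n : ℤ, D x = n) :
    ∀ x, D x = D 0 := by
  intro x
  by_contra hne
  obtain ⟨n, hn⟩ := hint x
  obtain ⟨m, hm⟩ := hint 0
  have hnm : n ≠ m := by rintro rfl; exact hne (hn.trans hm.symm)
  set t : ℝ := (max n m : ℝ) - 1/2 with ht
  have h1 : (min n m : ℤ) ≤ max n m - 1 := by
    rcases hnm.lt_or_gt with h | h
    · simp [min_eq_left h.le, max_eq_right h.le]; omega
    · simp [min_eq_right h.le, max_eq_left h.le]; omega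
  have hmem : t ∈ Set.uIcc (D 0) (D x) := by
    rw [hm, hn, Set.uIcc_comm, Set.mem_uIcc]
    rcases le_total (n:ℝ) (m:ℝ) with h | h
    · left
      constructor
      · have : (min n m : ℝ) ≤ (max n m : ℝ) - 1 := by exact_mod_cast h1
        have hmin : (min n m : ℝ) = n := by
          exact_mod_cast congrArg Int.cast (min_eq_left (by exact_mod_cast h))
        rw [ht]; rw [hmin] at this; linarith
      · have hmax : (max n m : ℝ) = m := by
          exact_mod_cast congrArg Int.cast (max_eq_right (by exact_mod_cast h))
        rw [ht, hmax]; linarith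
    · right
      constructor
      · have : (min n m : ℝ) ≤ (max n m : ℝ) - 1 := by exact_mod_cast h1
        have hmin : (min n m : ℝ) = m := by
          exact_mod_cast congrArg Int.cast (min_eq_right (by exact_mod_cast h))
        rw [ht]; rw [hmin] at this; linarith
      · have hmax : (max n m : ℝ) = n := by
          exact_mod_cast congrArg Int.cast (max_eq_left (by exact_mod_cast h))
        rw [ht, hmax]; linarith
  have := intermediate_value_uIcc (f := D) (a := (0:ℝ)) (b := x) hc.continuousOn hmem
  obtain ⟨c, _, hct⟩ := this
  obtain ⟨k, hk⟩ := hint c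
  rw [hk] at hct
  have : (2*k : ℤ) = 2 * max n m - 1 := by
    have : (2*k : ℝ) = 2 * (max n m : ℝ) - 1 := by rw [ht] at hct; push_cast at hct ⊢; linarith
    exact_mod_cast this
  omega

lemma lift_unique {f g : CircleDeg1Lift} {σ : Equiv.Perm Circle1}
    (hfc : Continuous ⇑f) (hgc : Continuous ⇑g)
    (hf : IsLiftOf f σ) (hg : IsLiftOf g σ) :
    ∃ n : ℤ, f = ↑(CircleDeg1Lift.translate (Multiplicative.ofAdd (n:ℝ))) * g := by
  have hint : ∀ x : ℝ, ∃ n : ℤ, f x - g x = n := by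
    intro x
    have : ((f x : ℝ) : Circle1) = ((g x : ℝ) : Circle1) := (hf x).symm.trans (hg x)
    have h2 : f x - g x ∈ AddSubgroup.zmultiples (1:ℝ) :=
      (QuotientAddGroup.eq_iff_sub_mem).mp this
    obtain ⟨n, hn⟩ := h2
    exact ⟨n, by rw [← hn]; simp⟩
  obtain ⟨n, hn⟩ := hint 0
  refine ⟨n, CircleDeg1Lift.ext fun x => ?_⟩
  have := int_valued_const (D := fun x => f x - g x) (hfc.sub hgc) hint x
  have hx : f x - g x = n := by rw [this, hn]
  simp only [CircleDeg1Lift.mul_apply]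
  rw [CircleDeg1Lift.translate_apply]
  linarith

lemma commute_translate_int (n : ℤ) (g : CircleDeg1Lift) :
    Commute (↑(CircleDeg1Lift.translate (Multiplicative.ofAdd (n:ℝ))) : CircleDeg1Lift) g := by
  rw [CircleDeg1Lift.commute_iff_commute]
  intro x
  simp only [Function.comp, CircleDeg1Lift.translate_apply]
  exact (g.map_int_add n x).symm

lemma tau_translate_mul (n : ℤ) (g : CircleDeg1Lift) :
    τ (↑(CircleDeg1Lift.translate (Multiplicative.ofAdd (n:ℝ))) * g) = n + τ g := by
  rw [CircleDeg1Lift.translationNumber_mul_of_commute (commute_translate_int n g),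
    CircleDeg1Lift.translationNumber_translate]

lemma commute_lift {u : CircleDeg1Liftˣ} {g : CircleDeg1Lift} {σ σ' : Equiv.Perm Circle1}
    (hu : IsLiftOf (u : CircleDeg1Lift) σ) (hg : IsLiftOf g σ')
    (huc : Continuous ⇑(u : CircleDeg1Lift)) (hgc : Continuous ⇑g)
    (hcomm : σ * σ' = σ' * σ) :
    Commute (u : CircleDeg1Lift) g := by
  have h1 : IsLiftOf ((u : CircleDeg1Lift) * g) (σ * σ') := lift_mul hu hg
  have h2 : IsLiftOf (g * (u : CircleDeg1Lift)) (σ * σ') := by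
    rw [hcomm]; exact lift_mul hg hu
  have hc1 : Continuous ⇑((u : CircleDeg1Lift) * g) := by
    rw [CircleDeg1Lift.coe_mul]; exact huc.comp hgc
  have hc2 : Continuous ⇑(g * (u : CircleDeg1Lift)) := by
    rw [CircleDeg1Lift.coe_mul]; exact hgc.comp huc
  obtain ⟨n, hn⟩ := lift_unique hc1 hc2 h1 h2
  have htau : τ ((u : CircleDeg1Lift) * g) = τ (g * (u : CircleDeg1Lift)) := by
    have : (u : CircleDeg1Lift) * (g * (u : CircleDeg1Lift)) * ↑u⁻¹ = (u : CircleDeg1Lift) * g := by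
      rw [mul_assoc, mul_assoc, Units.mul_inv, mul_one]
    rw [← this, CircleDeg1Lift.translationNumber_conj_eq]
  have hn0 : (n : ℝ) = 0 := by
    have := tau_translate_mul n (g * (u : CircleDeg1Lift))
    rw [← hn, htau] at this
    linarith
  have : n = 0 := by exact_mod_cast hn0
  subst this
  unfold Commute SemiconjBy
  rw [hn]
  norm_num

lemma torsion_of_span {d : ℕ} {H : AddSubgroup (Fin d → ℚ)}
    (hspan : Submodule.span ℚ (H : Set (Fin d → ℚ)) = ⊤) (v : Fin d → ℚ) :
    ∃ N : ℕ, 0 < N ∧ (N : ℤ) • v ∈ H := by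
  have hv : v ∈ Submodule.span ℚ (H : Set (Fin d → ℚ)) := by rw [hspan]; trivial
  induction hv using Submodule.span_induction with
  | mem x hx => exact ⟨1, one_pos, by simpa using hx⟩
  | zero => exact ⟨1, one_pos, by simpa using H.zero_mem⟩
  | add x y _ _ hx hy =>
      obtain ⟨N, hN, hNx⟩ := hx
      obtain ⟨M, hM, hMy⟩ := hy
      refine ⟨N * M, Nat.mul_pos hN hM, ?_⟩
      have : ((N * M : ℕ) : ℤ) • (x + y) = (M:ℤ) • ((N:ℤ) • x) + (N:ℤ) • ((M:ℤ) • y) := by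
        rw [smul_add, smul_smul, smul_smul]
        push_cast
        ring_nf
      rw [this]
      exact AddSubgroup.add_mem H (AddSubgroup.zsmul_mem H hNx _) (AddSubgroup.zsmul_mem H hMy _)
  | smul q x _ hx =>
      obtain ⟨N, hN, hNx⟩ := hx
      refine ⟨q.den * N, Nat.mul_pos q.pos hN, ?_⟩
      have : ((q.den * N : ℕ) : ℤ) • (q • x) = q.num • ((N:ℤ) • x) := by
        rw [← Int.cast_smul_eq_zsmul ℚ, ← Int.cast_smul_eq_zsmul ℚ q.num,
          ← Int.cast_smul_eq_zsmul ℚ ((N:ℤ)), smul_smul, smul_smul]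
        congr 1
        push_cast
        linear_combination (N:ℚ) * (Rat.mul_den_eq_num q)
      rw [this]
      exact AddSubgroup.zsmul_mem H hNx _

lemma exists_period_rel {d : ℕ} {A : Matrix (Fin d) (Fin d) ℚ}
    (hdet : (A - 1).det ≠ 0) {H : AddSubgroup (Fin d → ℚ)} {e : H ≃+ H}
    (he : ∀ h : H, ((e h : Fin d → ℚ)) = A.mulVec (h : Fin d → ℚ))
    (hspan : Submodule.span ℚ (H : Set (Fin d → ℚ)) = ⊤) (b : H) :
    ∃ N : ℕ, 0 < N ∧ ∃ c : H, e c - c = (N : ℤ) • b := by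
  have hu : IsUnit (A - 1).det := isUnit_iff_ne_zero.mpr hdet
  set v : Fin d → ℚ := (A - 1)⁻¹.mulVec (b : Fin d → ℚ) with hv
  obtain ⟨N, hN, hmem⟩ := torsion_of_span hspan v
  refine ⟨N, hN, ⟨(N:ℤ) • v, hmem⟩, ?_⟩
  apply Subtype.ext
  push_cast [AddSubgroup.coe_sub]
  rw [he]
  show A.mulVec ((N:ℤ) • v) - (N:ℤ) • v = (N:ℤ) • (b : Fin d → ℚ)
  have key : (A - 1).mulVec v = (b : Fin d → ℚ) := by
    rw [hv, Matrix.mulVec_mulVec, Matrix.mul_nonsing_inv _ hu, Matrix.one_mulVec]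
  have : A.mulVec ((N:ℤ) • v) - (N:ℤ) • v = (N:ℤ) • ((A - 1).mulVec v) := by
    rw [Matrix.sub_mulVec, Matrix.one_mulVec, smul_sub]
    congr 1
    rw [← Int.cast_smul_eq_zsmul ℚ, ← Int.cast_smul_eq_zsmul ℚ ((N:ℤ)) (A.mulVec v)]
    exact A.mulVec_smul (((N:ℤ):ℚ)) v
  rw [this, key]

lemma coe_add_int_circle (x : ℝ) (m : ℤ) : ((x + m : ℝ) : Circle1) = (x : Circle1) := by
  rw [QuotientAddGroup.eq_iff_sub_mem]
  exact ⟨m, by simp⟩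

lemma exists_rep_Ico (q : ℝ) (p : Circle1) :
    ∃ x : ℝ, x ∈ Set.Ico q (q+1) ∧ (x : Circle1) = p := by
  obtain ⟨y, rfl⟩ := QuotientAddGroup.mk_surjective p
  refine ⟨toIcoMod one_pos q y, by simpa using toIcoMod_mem_Ico one_pos q y, ?_⟩
  rw [QuotientAddGroup.eq_iff_sub_mem]
  refine ⟨-(toIcoDiv one_pos q y), ?_⟩
  rw [toIcoMod]
  simp

lemma fixed_in_invariant {σ : Equiv.Perm Circle1} (h : IsHomeoCirclePerm σ)
    {K : Set Circle1} (hK : K.Nonempty) (hKc : IsClosed K) (hKinv : ∀ p ∈ K, σ p ∈ K)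
    (hfix : ∃ p, σ p = p) : ∃ p ∈ K, σ p = p := by
  obtain ⟨F, hFm, hFc, hFper, hFlift⟩ := h
  obtain ⟨p₀, hp₀⟩ := hfix
  obtain ⟨q₀, hq₀⟩ := QuotientAddGroup.mk_surjective p₀
  have : ((F q₀ : ℝ) : Circle1) = (q₀ : Circle1) := by rw [← hFlift, hq₀, hp₀]
  obtain ⟨m, hm⟩ := (QuotientAddGroup.eq_iff_sub_mem).mp this.symm
  set G : ℝ → ℝ := fun x => F x + m with hG
  have hGlift : ∀ x : ℝ, σ (x : Circle1) = (G x : Circle1) := by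
    intro x; rw [hFlift, hG]; exact (coe_add_int_circle (F x) m).symm
  have hGm : StrictMono G := fun a b hab => by simpa [hG] using hFm hab
  have hGc : Continuous G := hFc.add continuous_const
  have hGper : ∀ x, G (x+1) = G x + 1 := fun x => by simp [hG, hFper x]; ring
  have hGq₀ : G q₀ = q₀ := by
    have : (m:ℝ) * 1 = q₀ - F q₀ := by simpa [zsmul_eq_mul] using hm
    simp [hG]; linarith
  have hmaps : ∀ x ∈ Set.Icc q₀ (q₀+1), G x ∈ Set.Icc q₀ (q₀+1) := by
    intro x hx
    constructor
    · rw [← hGq₀]; exact hGm.monotone hx.1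
    · have : G x ≤ G (q₀ + 1) := hGm.monotone hx.2
      rw [hGper, hGq₀] at this; exact this
  obtain ⟨p, hp⟩ := hK
  obtain ⟨x₀, hx₀mem, hx₀⟩ := exists_rep_Ico q₀ p
  set xseq : ℕ → ℝ := fun n => G^[n] x₀ with hxseq
  have hIcc : ∀ n, xseq n ∈ Set.Icc q₀ (q₀+1) := by
    intro n
    induction n with
    | zero => exact ⟨hx₀mem.1, hx₀mem.2.le⟩
    | succ n ih => show G^[n+1] x₀ ∈ _; rw [Function.iterate_succ_apply']; exact hmaps _ ih
  have hinK : ∀ n, ((xseq n : ℝ) : Circle1) ∈ K := by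
    intro n
    induction n with
    | zero => show ((G^[0] x₀ : ℝ) : Circle1) ∈ K; rwa [Function.iterate_zero_apply, hx₀]
    | succ n ih =>
        show ((G^[n+1] x₀ : ℝ) : Circle1) ∈ K
        rw [Function.iterate_succ_apply', ← hGlift]
        exact hKinv _ ih
  have key : ∃ L ∈ Set.Icc q₀ (q₀+1), Filter.Tendsto xseq Filter.atTop (nhds L) := by
    rcases le_total x₀ (G x₀) with hc | hc
    · have hmono : Monotone xseq := Monotone.monotone_iterate_of_le_map hGm.monotone hc
      have hbdd : BddAbove (Set.range xseq) := ⟨q₀+1, by rintro _ ⟨n, rfl⟩; exact (hIcc n).2⟩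
      refine ⟨⨆ n, xseq n, ⟨?_, ?_⟩, tendsto_atTop_ciSup hmono hbdd⟩
      · exact le_trans (hIcc 0).1 (le_ciSup hbdd 0)
      · exact ciSup_le fun n => (hIcc n).2
    · have hmono : Antitone xseq := Monotone.antitone_iterate_of_map_le hGm.monotone hc
      have hbdd : BddBelow (Set.range xseq) := ⟨q₀, by rintro _ ⟨n, rfl⟩; exact (hIcc n).1⟩
      refine ⟨⨅ n, xseq n, ⟨?_, ?_⟩, tendsto_atTop_ciInf hmono hbdd⟩
      · exact le_ciInf fun n => (hIcc n).1
      · exact le_trans (ciInf_le hbdd 0) (hIcc 0).2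
  obtain ⟨L, _, hL⟩ := key
  have hGL : G L = L := by
    have h1 : Filter.Tendsto (fun n => xseq (n+1)) Filter.atTop (nhds L) :=
      hL.comp (Filter.tendsto_add_atTop_nat 1)
    have h2 : Filter.Tendsto (fun n => G (xseq n)) Filter.atTop (nhds (G L)) :=
      (hGc.continuousAt.tendsto).comp hL
    have heq : (fun n => xseq (n+1)) = fun n => G (xseq n) := by
      funext n; exact Function.iterate_succ_apply' G n x₀
    rw [heq] at h1
    exact tendsto_nhds_unique h2 h1
  refine ⟨(L : Circle1), ?_, ?_⟩
  · have : Filter.Tendsto (fun n => ((xseq n : ℝ) : Circle1)) Filter.atTop (nhds (L : Circle1)) :=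
      ((AddCircle.continuous_mk' 1).continuousAt.tendsto).comp hL
    exact hKc.mem_of_tendsto this (Filter.Eventually.of_forall hinK)
  · rw [hGlift, hGL]

section GroupLemmas

variable {d : ℕ} {H : AddSubgroup (Fin d → ℚ)} {e : H ≃+ H}

lemma elemSd_eq_inl (b : H) :
    (elemSd 0 b : GSd H e) = SemidirectProduct.inl (Multiplicative.ofAdd b) := rfl

lemma inl_pow (b : H) (k : ℕ) :
    (SemidirectProduct.inl (Multiplicative.ofAdd b) : GSd H e) ^ k
      = SemidirectProduct.inl (Multiplicative.ofAdd ((k:ℤ) • b)) := by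
  rw [← map_pow]
  congr 1

lemma inl_sub (x y : H) :
    (SemidirectProduct.inl (Multiplicative.ofAdd (x - y)) : GSd H e)
      = SemidirectProduct.inl (Multiplicative.ofAdd x)
        * (SemidirectProduct.inl (Multiplicative.ofAdd y))⁻¹ := by
  rw [← map_inv, ← _root_.map_mul]
  congr 1
  rw [← ofAdd_neg, ← ofAdd_add, sub_eq_add_neg]

lemma conj_inl_general (g : GSd H e) (x : Multiplicative H) :
    g * SemidirectProduct.inl x * g⁻¹
      = SemidirectProduct.inl
          ((zpowersHom (MulAut (Multiplicative H)) (AddEquiv.toMultiplicative e)) g.right x) := by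
  conv_lhs => rw [← SemidirectProduct.inl_left_mul_inr_right g]
  rw [_root_.mul_inv_rev, ← map_inv, ← map_inv]
  rw [show SemidirectProduct.inl g.left * SemidirectProduct.inr g.right * SemidirectProduct.inl x
      * (SemidirectProduct.inr g.right⁻¹ * SemidirectProduct.inl g.left⁻¹)
      = SemidirectProduct.inl g.left
        * (SemidirectProduct.inr g.right * SemidirectProduct.inl x * SemidirectProduct.inr g.right⁻¹)
        * SemidirectProduct.inl g.left⁻¹ by group]
  rw [← SemidirectProduct.inl_aut, ← _root_.map_mul, ← _root_.map_mul]
  congr 1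
  rw [mul_comm g.left, mul_assoc, mul_inv_cancel, mul_one]

lemma inl_conj_a (c : H) :
    (SemidirectProduct.inl (Multiplicative.ofAdd (e c)) : GSd H e)
      = SemidirectProduct.inr (Multiplicative.ofAdd (1:ℤ))
        * SemidirectProduct.inl (Multiplicative.ofAdd c)
        * (SemidirectProduct.inr (Multiplicative.ofAdd (1:ℤ)))⁻¹ := by
  rw [conj_inl_general (SemidirectProduct.inr (Multiplicative.ofAdd (1:ℤ)))
    (Multiplicative.ofAdd c)]
  congr 1

end GroupLemmas

lemma period_exists {d : ℕ} {A : Matrix (Fin d) (Fin d) ℚ}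
    (hdet : (A - 1).det ≠ 0) {H : AddSubgroup (Fin d → ℚ)} {e : H ≃+ H}
    (he : ∀ h : H, ((e h : Fin d → ℚ)) = A.mulVec (h : Fin d → ℚ))
    (hspan : Submodule.span ℚ (H : Set (Fin d → ℚ)) = ⊤)
    (ρ : GSd H e →* Equiv.Perm Circle1)
    (f : GSd H e → CircleDeg1Lift)
    (hfc : ∀ g, Continuous ⇑(f g)) (hfu : ∀ g, IsUnit (f g))
    (hfl : ∀ g, IsLiftOf (f g) (ρ g)) (b : H) :
    ∃ k : ℕ, 0 < k ∧ ∃ p : Circle1, ((ρ (elemSd 0 b)) ^ k) p = p := by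
  obtain ⟨N, hN, c, hc⟩ := exists_period_rel hdet he hspan b
  set gb : GSd H e := SemidirectProduct.inl (Multiplicative.ofAdd b) with hgb
  set gc : GSd H e := SemidirectProduct.inl (Multiplicative.ofAdd c) with hgc
  set ga : GSd H e := SemidirectProduct.inr (Multiplicative.ofAdd (1:ℤ)) with hga
  set u : CircleDeg1Liftˣ := (hfu ga).unit with hu
  set v : CircleDeg1Liftˣ := (hfu gc).unit with hv
  have huL : IsLiftOf (u : CircleDeg1Lift) (ρ ga) := by
    rw [hu, IsUnit.unit_spec]; exact hfl ga
  have hvL : IsLiftOf (v : CircleDeg1Lift) (ρ gc) := by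
    rw [hv, IsUnit.unit_spec]; exact hfl gc
  set Pu : CircleDeg1Liftˣ := u * v * u⁻¹ with hPu
  set Pl : CircleDeg1Lift := (Pu : CircleDeg1Lift) with hPl
  have hPlval : Pl = (u : CircleDeg1Lift) * (v : CircleDeg1Lift) * ((u⁻¹ : CircleDeg1Liftˣ) : CircleDeg1Lift) := by
    rw [hPl, hPu, Units.val_mul, Units.val_mul]
  set σec : Equiv.Perm Circle1 := ρ (SemidirectProduct.inl (Multiplicative.ofAdd (e c))) with hσec
  have hPlift : IsLiftOf Pl σec := by
    rw [hσec, inl_conj_a, _root_.map_mul, _root_.map_mul, map_inv, hPlval]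
    exact lift_mul (lift_mul huL hvL) (lift_inv huL)
  set Ql : CircleDeg1Lift := ((v⁻¹ : CircleDeg1Liftˣ) : CircleDeg1Lift) with hQl
  have hQlift : IsLiftOf Ql (ρ gc)⁻¹ := lift_inv hvL
  -- the product lifts ρ (gb ^ N)
  have hgbN : gb ^ N = SemidirectProduct.inl (Multiplicative.ofAdd (e c)) * gc⁻¹ := by
    rw [hgb, inl_pow, ← hc, inl_sub, hgc]
  have hPQlift : IsLiftOf (Pl * Ql) (ρ (gb ^ N)) := by
    rw [hgbN, _root_.map_mul, map_inv]
    exact lift_mul hPlift hQlift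
  have hfNlift : IsLiftOf ((f gb) ^ N) (ρ (gb ^ N)) := by
    rw [map_pow]
    exact lift_pow (hfl gb) N
  -- continuity
  have hPQc : Continuous ⇑(Pl * Ql) := by
    rw [CircleDeg1Lift.coe_mul]
    exact ((unit_coe_continuous Pu).comp (unit_coe_continuous v⁻¹))
  have hfNc : Continuous ⇑((f gb) ^ N) := (f gb).continuous_pow (hfc gb) N
  obtain ⟨n1, hn1⟩ := lift_unique hfNc hPQc hfNlift hPQlift
  -- commutation of the two lifts
  have hcommσ : σec * (ρ gc)⁻¹ = (ρ gc)⁻¹ * σec := by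
    rw [hσec, hgc, ← map_inv, ← _root_.map_mul, ← _root_.map_mul]
    congr 1
    rw [← map_inv, ← _root_.map_mul, ← _root_.map_mul, mul_comm]
  have hPQcomm : Commute Pl Ql :=
    commute_lift (u := Pu) hPlift hQlift (unit_coe_continuous Pu) (unit_coe_continuous v⁻¹) hcommσ
  -- translation number computation
  have htauPQ : τ (Pl * Ql) = 0 := by
    rw [CircleDeg1Lift.translationNumber_mul_of_commute hPQcomm]
    have h1 : τ Pl = τ (v : CircleDeg1Lift) := by
      rw [hPlval, CircleDeg1Lift.translationNumber_conj_eq]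
    have h2 : τ Ql = -τ (v : CircleDeg1Lift) := CircleDeg1Lift.translationNumber_units_inv v
    rw [h1, h2]; ring
  have htauN : (N : ℝ) * τ (f gb) = n1 := by
    have h3 : τ ((f gb) ^ N) = (N : ℝ) * τ (f gb) :=
      CircleDeg1Lift.translationNumber_pow (f gb) N
    rw [← h3, hn1, tau_translate_mul, htauPQ, add_zero]
  have hrat : τ (f gb) = (n1 : ℝ) / N := by
    field_simp
    linarith [htauN]
  obtain ⟨x, hx⟩ := ((f gb).translationNumber_eq_rat_iff (hfc gb) hN).mp hrat
  refine ⟨N, hN, (x : Circle1), ?_⟩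
  have := lift_pow (hfl gb) N x
  rw [elemSd_eq_inl, ← hgb, this, hx]
  exact coe_add_int_circle x n1


/-- If `1` is not an eigenvalue of `A` (`det (A − I) ≠ 0`), then for
every action of `G = ℤ ⋉_A H` by orientation-preserving homeomorphisms of the circle
`ℝ/ℤ`, the set of common periodic points of the elements of `H` is nonempty and
`G`-invariant. -/
theorem stmt_19 {d : ℕ} (hd : 0 < d) (A : Matrix (Fin d) (Fin d) ℚ) (hA : IsUnit A.det)
    (hdet : (A - 1).det ≠ 0) (H : AddSubgroup (Fin d → ℚ)) (e : H ≃+ H)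
    (he : ∀ h : H, ((e h : Fin d → ℚ)) = A.mulVec (h : Fin d → ℚ))
    (hspan : Submodule.span ℚ (H : Set (Fin d → ℚ)) = ⊤)
    (ρ : GSd H e →* Equiv.Perm Circle1) (hρ : ∀ g, IsHomeoCirclePerm (ρ g)) :
    ({p : Circle1 | ∀ b : H, ∃ k : ℕ, 0 < k ∧ ((ρ (elemSd 0 b)) ^ k) p = p}).Nonempty ∧
    ∀ g : GSd H e,
      (⇑(ρ g)) '' {p : Circle1 | ∀ b : H, ∃ k : ℕ, 0 < k ∧ ((ρ (elemSd 0 b)) ^ k) p = p}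
        = {p : Circle1 | ∀ b : H, ∃ k : ℕ, 0 < k ∧ ((ρ (elemSd 0 b)) ^ k) p = p} := by
  classical
  choose f hfc hfu hfl using fun g => lift_exists (hρ g)
  set P : Set Circle1 :=
    {p : Circle1 | ∀ b : H, ∃ k : ℕ, 0 < k ∧ ((ρ (elemSd 0 b)) ^ k) p = p} with hP
  have hper := fun b : H => period_exists hdet he hspan ρ f hfc hfu hfl b
  choose k hk p0 hp0 using hper
  have hpow : ∀ b : H, (ρ (elemSd 0 b)) ^ (k b)
      = ρ (SemidirectProduct.inl (Multiplicative.ofAdd (((k b : ℤ)) • b))) := fun b => by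
    rw [elemSd_eq_inl, ← map_pow, inl_pow]
  set C : H → Set Circle1 := fun b => {p | ((ρ (elemSd 0 b)) ^ (k b)) p = p} with hC
  have hCont : ∀ g : GSd H e, Continuous ⇑(ρ g) := fun g => lift_continuous_circle (hfc g) (hfl g)
  have hCclosed : ∀ b, IsClosed (C b) := by
    intro b
    have : C b = {p | (ρ (SemidirectProduct.inl (Multiplicative.ofAdd (((k b : ℤ)) • b)))) p = p} := by
      rw [hC]; simp only [hpow b]
    rw [this]
    exact isClosed_eq (hCont _) continuous_id
  have hCne : ∀ b, (C b).Nonempty := fun b => ⟨p0 b, hp0 b⟩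
  -- commutation of H-part homeomorphisms
  have hHcomm : ∀ x y : Multiplicative H,
      ρ (SemidirectProduct.inl x) * ρ (SemidirectProduct.inl y)
        = ρ (SemidirectProduct.inl y) * ρ (SemidirectProduct.inl x) := by
    intro x y
    simp only [← _root_.map_mul, mul_comm x y]
  -- finite intersections are nonempty
  have hfin : ∀ s : Finset H, (⋂ b ∈ s, C b).Nonempty := by
    intro s
    induction s using Finset.induction_on with
    | empty => simpa using ⟨(0 : Circle1), trivial⟩
    | @insert b s hb ih =>
        set σb : Equiv.Perm Circle1 :=
          ρ (SemidirectProduct.inl (Multiplicative.ofAdd (((k b : ℤ)) • b))) with hσb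
        have hKinv : ∀ p ∈ ⋂ b' ∈ s, C b', σb p ∈ ⋂ b' ∈ s, C b' := by
          intro p hpmem
          rw [Set.mem_iInter₂] at hpmem ⊢
          intro b' hb'
          have hp' : ((ρ (elemSd 0 b')) ^ (k b')) p = p := hpmem b' hb'
          show ((ρ (elemSd 0 b')) ^ (k b')) (σb p) = σb p
          rw [hpow b']
          have := hHcomm (Multiplicative.ofAdd (((k b' : ℤ)) • b')) (Multiplicative.ofAdd (((k b : ℤ)) • b))
          have happ := congrArg (fun π : Equiv.Perm Circle1 => π p) this
          simp only [Equiv.Perm.mul_apply] at happ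
          rw [hσb, happ]
          congr 1
          rw [← hpow b'] at *
          exact hp'
        have hfix : ∃ p, σb p = p := by
          obtain ⟨p, hp⟩ := hCne b
          exact ⟨p, by rw [hσb, ← hpow b]; exact hp⟩
        obtain ⟨q, hqK, hqfix⟩ := fixed_in_invariant (hρ _) ih
          (isClosed_biInter fun b' _ => hCclosed b') hKinv hfix
        refine ⟨q, ?_⟩
        rw [Set.mem_iInter₂]
        intro b' hb'
        rcases Finset.mem_insert.mp hb' with rfl | hmem
        · show ((ρ (elemSd 0 b')) ^ (k b')) q = q
          rw [hpow b', ← hσb]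
          exact hqfix
        · exact (Set.mem_iInter₂.mp hqK) b' hmem
  -- compactness: the whole intersection is nonempty
  have hinterne : (⋂ b : H, C b).Nonempty := by
    set D : Finset H → Set Circle1 := fun s => ⋂ b ∈ s, C b with hD
    have hdir : Directed (· ⊇ ·) D := by
      intro s t
      refine ⟨s ∪ t, ?_, ?_⟩
      · intro p hp
        rw [Set.mem_iInter₂] at hp ⊢
        exact fun b hb => hp b (Finset.mem_union_left _ hb)
      · intro p hp
        rw [Set.mem_iInter₂] at hp ⊢
        exact fun b hb => hp b (Finset.mem_union_right _ hb)
    have hclosed : ∀ s : Finset H, IsClosed (D s) := fun s =>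
      isClosed_biInter fun b _ => hCclosed b
    have hcompact : ∀ s : Finset H, IsCompact (D s) := fun s => (hclosed s).isCompact
    obtain ⟨x, hx⟩ := IsCompact.nonempty_iInter_of_directed_nonempty_isCompact_isClosed
      D hdir hfin hcompact hclosed
    refine ⟨x, Set.mem_iInter.mpr fun b => ?_⟩
    have := Set.mem_iInter.mp hx {b}
    simpa [hD] using this
  constructor
  · obtain ⟨x, hx⟩ := hinterne
    exact ⟨x, fun b => ⟨k b, hk b, Set.mem_iInter.mp hx b⟩⟩
  · -- invariance
    have claim : ∀ g : GSd H e, ∀ q, q ∈ P → ρ g q ∈ P := by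
      intro g q hq b
      set Φ := (zpowersHom (MulAut (Multiplicative H)) (AddEquiv.toMultiplicative e)) g.right with hΦ
      set y : Multiplicative H := Φ⁻¹ (Multiplicative.ofAdd b) with hy
      have hyconj : g * SemidirectProduct.inl y * g⁻¹
          = SemidirectProduct.inl (Multiplicative.ofAdd b) := by
        rw [conj_inl_general g y, hy]
        congr 1
        rw [← hΦ]
        simp [MulAut.apply_inv_self]
      obtain ⟨k', hk', hfixq⟩ := hq (Multiplicative.toAdd y)
      refine ⟨k', hk', ?_⟩
      have hsdy : (elemSd 0 (Multiplicative.toAdd y) : GSd H e) = SemidirectProduct.inl y := rfl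
      rw [hsdy] at hfixq
      have key : (ρ (elemSd 0 b)) ^ k' = ρ g * (ρ (SemidirectProduct.inl y)) ^ k' * (ρ g)⁻¹ := by
        rw [elemSd_eq_inl, ← hyconj, ← map_pow, ← map_pow]
        have : (g * SemidirectProduct.inl y * g⁻¹) ^ k' = g * (SemidirectProduct.inl y) ^ k' * g⁻¹ := by
          have := map_pow (MulAut.conj g) (SemidirectProduct.inl y) k'
          simpa [MulAut.conj_apply] using this.symm
        rw [this]
        try rw [_root_.map_mul, _root_.map_mul, map_inv]
        try rfl
      rw [key]
      simp only [Equiv.Perm.mul_apply]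
      have hcancel : ((ρ g)⁻¹ : Equiv.Perm Circle1) (ρ g q) = q := (ρ g).symm_apply_apply _
      rw [hcancel, hfixq]
    intro g
    apply Set.Subset.antisymm
    · rintro _ ⟨q, hq, rfl⟩
      exact claim g q hq
    · intro q hq
      refine ⟨ρ g⁻¹ q, claim g⁻¹ q hq, ?_⟩
      have : ρ g (ρ g⁻¹ q) = (ρ g * ρ g⁻¹) q := rfl
      rw [this, ← _root_.map_mul, mul_inv_cancel, _root_.map_one]
      rfl


end
end
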